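/- If a finite group G is a QσT-group, then for every normal subgroup R of G the quotient G/R satisfies Q_{σ(p,q)} for every pair of primes (p, q) for which a non-abelian P-group of type (p, q) exists. -/

import Mathlib

open Subgroup
open scoped Pointwise

/-- A partition of the set of all primes into pairwise disjoint nonempty blocks. -/
structure SigmaPartition : Type where
  blocks : Set (Set ℕ)
  nonempty : ∀ s ∈ blocks, s.Nonempty
  mem_prime : ∀ s ∈ blocks, ∀ p ∈ s, p.Prime
  pairwise_disjoint : ∀ s ∈ blocks, ∀ t ∈ blocks, s ≠ t → Disjoint s t
  covers : ∀ p : ℕ, p.Prime → ∃ s ∈ blocks, p ∈ s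

/-- `n` is a σ-primary number: all of its prime divisors lie in a single block of σ. -/
def IsSigmaPrimaryCard (σ : SigmaPartition) (n : ℕ) : Prop :=
  ∃ s ∈ σ.blocks, ∀ p : ℕ, p.Prime → p ∣ n → p ∈ s

/-- A group is σ-primary if all primes dividing its order lie in one block of σ. -/
def IsSigmaPrimary (σ : SigmaPartition) (X : Type*) [Group X] : Prop :=
  IsSigmaPrimaryCard σ (Nat.card X)

section

variable {G : Type*} [Group G]

/-- A subgroup is modular if it is a modular element (in the sense of Kurosh)
of the lattice of all subgroups. -/
def IsModularSubgroup (M : Subgroup G) : Prop :=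
  (∀ X Z : Subgroup G, X ≤ Z → X ⊔ (M ⊓ Z) = (X ⊔ M) ⊓ Z) ∧
  (∀ Y Z : Subgroup G, M ≤ Z → M ⊔ (Y ⊓ Z) = (M ⊔ Y) ⊓ Z)

/-- One step of a σ-subnormal chain: `A ≤ B` and either `A` is normal in `B` or
`B` modulo the normal core of `A` in `B` is σ-primary. -/
def SigmaStep (σ : SigmaPartition) (A B : Subgroup G) : Prop :=
  A ≤ B ∧ ((A.subgroupOf B).Normal ∨
    IsSigmaPrimaryCard σ (Nat.card (↥B ⧸ (A.subgroupOf B).normalCore)))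

/-- `A` is σ-subnormal in the ambient group. -/
def IsSigmaSubnormal (σ : SigmaPartition) (A : Subgroup G) : Prop :=
  ∃ (n : ℕ) (c : Fin (n + 1) → Subgroup G), c 0 = A ∧ c (Fin.last n) = ⊤ ∧
    ∀ i : Fin n, SigmaStep σ (c i.castSucc) (c i.succ)

/-- `A` is σ-quasinormal: σ-subnormal and modular. -/
def IsSigmaQuasinormal (σ : SigmaPartition) (A : Subgroup G) : Prop :=
  IsSigmaSubnormal σ A ∧ IsModularSubgroup A

/-- `A` is σ-quasinormal in the intermediate subgroup `B`. -/
def IsSigmaQuasinormalIn (σ : SigmaPartition) (A B : Subgroup G) : Prop :=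
  A ≤ B ∧ IsSigmaQuasinormal σ (A.subgroupOf B)

/-- `A` is σ-subquasinormal: there is a chain from `A` to the whole group with
each term σ-quasinormal in the next. -/
def IsSigmaSubquasinormal (σ : SigmaPartition) (A : Subgroup G) : Prop :=
  ∃ (n : ℕ) (c : Fin (n + 1) → Subgroup G), c 0 = A ∧ c (Fin.last n) = ⊤ ∧
    ∀ i : Fin n, IsSigmaQuasinormalIn σ (c i.castSucc) (c i.succ)

/-- `H` is subnormal in the ambient group. -/
def IsSubnormalSubgroup (H : Subgroup G) : Prop :=
  ∃ (n : ℕ) (c : Fin (n + 1) → Subgroup G), c 0 = H ∧ c (Fin.last n) = ⊤ ∧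
    ∀ i : Fin n, c i.castSucc ≤ c i.succ ∧ ((c i.castSucc).subgroupOf (c i.succ)).Normal

/-- The factor `H/K` (for `K ≤ H`) is cyclic, elementwise formulation. -/
def IsCyclicFactor (H K : Subgroup G) : Prop :=
  ∃ g ∈ H, ∀ h ∈ H, ∃ n : ℤ, (g ^ n)⁻¹ * h ∈ K

end

/-- `G` is a QσT-group: σ-quasinormality is transitive in `G`. -/
def IsQSigmaT (σ : SigmaPartition) (G : Type*) [Group G] : Prop :=
  ∀ H K : Subgroup G, H ≤ K →
    IsSigmaQuasinormal σ (H.subgroupOf K) → IsSigmaQuasinormal σ K →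
    IsSigmaQuasinormal σ H

/-- `(D, Z; U 1, …, U k)` is a Robinson complex of `G`. -/
def IsRobinsonComplex (G : Type*) [Group G] (D Z : Subgroup G)
    (k : ℕ) (U : Fin k → Subgroup G) : Prop :=
  D ≠ ⊥ ∧ D.Normal ∧ ⁅D, D⁆ = D ∧
  Z = (Subgroup.center ↥D).map D.subtype ∧
  Z = (frattini ↥D).map D.subtype ∧
  (∀ i, Z ≤ U i ∧ U i ≤ D ∧ (U i).Normal) ∧
  (⨆ i, U i) = D ∧
  (∀ i, U i ⊓ (Z ⊔ ⨆ j ∈ ({j | j ≠ i} : Set (Fin k)), U j) = Z) ∧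
  (∀ i, ¬ ⁅U i, U i⁆ ≤ Z) ∧
  (∀ i, ∀ N : Subgroup G, Z ≤ N → N ≤ U i → (N.subgroupOf (U i)).Normal →
    N = Z ∨ N = U i) ∧
  (∀ H K : Subgroup G, H.Normal → K.Normal → K < H → H ≤ Z →
    (∀ N : Subgroup G, N.Normal → K ≤ N → N ≤ H → N = K ∨ N = H) →
    IsCyclicFactor H K)

/-- The largest normal p-subgroup `O_p(X)`. -/
def pCoreSubgroup (p : ℕ) (X : Type*) [Group X] : Subgroup X :=
  sSup {P : Subgroup X | P.Normal ∧ IsPGroup p ↥P}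

/-- `G` satisfies `N_p`: whenever `N` is a soluble normal subgroup of `G`,
p'-elements of `G/N` induce power automorphisms on `O_p(G/N)`. -/
def SatisfiesNp (p : ℕ) (G : Type*) [Group G] : Prop :=
  ∀ (N : Subgroup G) [N.Normal], IsSolvable ↥N →
    ∀ x : G ⧸ N, ¬ p ∣ orderOf x →
      ∀ S : Subgroup (G ⧸ N), S ≤ pCoreSubgroup p (G ⧸ N) →
        ∀ s ∈ S, x * s * x⁻¹ ∈ S

/-- `G` satisfies `P_p`: whenever `N` is a soluble normal subgroup of `G`,
every subgroup of `O_p(G/N)` is quasinormal in every Sylow p-subgroup of `G/N`. -/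
def SatisfiesPp (p : ℕ) (G : Type*) [Group G] : Prop :=
  ∀ (N : Subgroup G) [N.Normal], IsSolvable ↥N →
    ∀ S : Subgroup (G ⧸ N), S ≤ pCoreSubgroup p (G ⧸ N) →
      ∀ P : Sylow p (G ⧸ N), ∀ T : Subgroup (G ⧸ N), T ≤ ↑P →
        (S : Set (G ⧸ N)) * (T : Set (G ⧸ N)) = (T : Set (G ⧸ N)) * (S : Set (G ⧸ N))

/-- `X` is a non-abelian P-group of type `(p, q)`: `X = A ⋊ ⟨t⟩` with `A` a non-trivial
elementary abelian p-group and `t` of prime order `q ≠ p` inducing a non-trivial power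
automorphism on `A`. -/
def IsPGroupOfType (p q : ℕ) (X : Type*) [Group X] : Prop :=
  p.Prime ∧ q.Prime ∧ p ≠ q ∧
  ∃ (A : Subgroup X) (t : X),
    A ≠ ⊥ ∧ (∀ a ∈ A, a ^ p = 1) ∧ (∀ a ∈ A, ∀ b ∈ A, a * b = b * a) ∧
    orderOf t = q ∧ A.Normal ∧ A ⊔ Subgroup.zpowers t = ⊤ ∧
    A ⊓ Subgroup.zpowers t = ⊥ ∧
    (∀ S : Subgroup X, S ≤ A → ∀ s ∈ S, t * s * t⁻¹ ∈ S) ∧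
    ∃ a ∈ A, t * a * t⁻¹ ≠ a

/-- `G` satisfies `Q_{σ(p,q)}`. -/
def SatisfiesQSigmaPQ (σ : SigmaPartition) (p q : ℕ) (G : Type*) [Group G] : Prop :=
  ∀ (N : Subgroup G) [N.Normal], IsSolvable ↥N →
    ∀ P : Subgroup (G ⧸ N), P.Normal → IsSigmaPrimary σ ↥P → IsPGroupOfType p q ↥P →
      ∀ S : Subgroup (G ⧸ N), S ≤ P → IsModularSubgroup S

/-- `G` satisfies `M_{p,q}`. -/
def SatisfiesMpq (p q : ℕ) (G : Type*) [Group G] : Prop :=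
  ∀ (N : Subgroup G) [N.Normal], IsSolvable ↥N →
    ∀ P : Subgroup (G ⧸ N), P.Normal → IsPGroupOfType p q ↥P →
      ∀ S : Subgroup (G ⧸ N), S ≤ P → IsModularSubgroup S

section Aux
variable {G : Type*} [Group G] {H₁ : Type*} [Group H₁]

theorem isSigmaPrimaryCard_of_dvd (σ : SigmaPartition) {m n : ℕ}
    (h : IsSigmaPrimaryCard σ n) (hmn : m ∣ n) : IsSigmaPrimaryCard σ m := by
  obtain ⟨s, hs, hall⟩ := h
  exact ⟨s, hs, fun p hp hd => hall p hp (hd.trans hmn)⟩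

theorem isModular_of_normal (M : Subgroup G) (hM : M.Normal) : IsModularSubgroup M := by
  haveI := hM
  constructor
  · intro X Z hXZ
    refine le_antisymm (sup_le (le_inf le_sup_left hXZ)
      (le_inf (inf_le_left.trans le_sup_right) inf_le_right)) ?_
    intro z hz
    obtain ⟨hz1, hz2⟩ := Subgroup.mem_inf.mp hz
    have hz1' : z ∈ (↑(X ⊔ M) : Set G) := hz1
    rw [Subgroup.mul_normal] at hz1'
    obtain ⟨x, hx, m, hm, rfl⟩ := hz1'
    have hmZ : m ∈ Z := by
      have : x⁻¹ * (x * m) ∈ Z := mul_mem (inv_mem (hXZ hx)) hz2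
      simpa using this
    exact mul_mem (le_sup_left (α := Subgroup G) hx)
      ((le_sup_right : M ⊓ Z ≤ X ⊔ (M ⊓ Z)) ⟨hm, hmZ⟩)
  · intro Y Z hMZ
    refine le_antisymm (sup_le (le_inf le_sup_left hMZ)
      (le_inf (inf_le_left.trans le_sup_right) inf_le_right)) ?_
    intro z hz
    obtain ⟨hz1, hz2⟩ := Subgroup.mem_inf.mp hz
    have hz1' : z ∈ (↑(M ⊔ Y) : Set G) := hz1
    rw [Subgroup.normal_mul] at hz1'
    obtain ⟨m, hm, y, hy, rfl⟩ := hz1'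
    have hyZ : y ∈ Z := by
      have : m⁻¹ * (m * y) ∈ Z := mul_mem (inv_mem (hMZ hm)) hz2
      simpa using this
    exact mul_mem (le_sup_left (α := Subgroup G) hm)
      ((le_sup_right : Y ⊓ Z ≤ M ⊔ (Y ⊓ Z)) ⟨hy, hyZ⟩)

end Aux

section Aux2
variable {G : Type*} [Group G] {H₁ : Type*} [Group H₁]

/-- image of an intersection where the right factor is a comap. -/
theorem map_inf_comap_right (f : G →* H₁) (W : Subgroup G) (Z' : Subgroup H₁) :
    Subgroup.map f (W ⊓ Subgroup.comap f Z') = Subgroup.map f W ⊓ Z' := by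
  apply le_antisymm
  · rintro _ ⟨u, hu, rfl⟩
    exact ⟨⟨u, hu.1, rfl⟩, hu.2⟩
  · rintro w ⟨⟨u, hu, rfl⟩, hw2⟩
    exact ⟨u, ⟨hu, hw2⟩, rfl⟩

/-- image of an intersection where the left factor contains the kernel. -/
theorem map_inf_of_ker_le (f : G →* H₁) {Y : Subgroup G} (Z : Subgroup G)
    (hY : f.ker ≤ Y) :
    Subgroup.map f (Y ⊓ Z) = Subgroup.map f Y ⊓ Subgroup.map f Z := by
  apply le_antisymm
  · rintro _ ⟨u, hu, rfl⟩
    exact ⟨⟨u, hu.1, rfl⟩, ⟨u, hu.2, rfl⟩⟩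
  · rintro w ⟨⟨y, hy, hyw⟩, ⟨z, hz, hzw⟩⟩
    have hker : y⁻¹ * z ∈ f.ker := by
      rw [MonoidHom.mem_ker, map_mul, map_inv, hyw, hzw, inv_mul_cancel]
    have hzY : z ∈ Y := by
      have := mul_mem hy (hY hker)
      simpa using this
    exact ⟨z, ⟨hzY, hz⟩, hzw⟩

theorem isModular_comap {f : G →* H₁} (hf : Function.Surjective f) {M : Subgroup H₁}
    (hM : IsModularSubgroup M) : IsModularSubgroup (Subgroup.comap f M) := by
  obtain ⟨hM1, hM2⟩ := hM
  have hker : ∀ W : Subgroup H₁, f.ker ≤ Subgroup.comap f W := fun W x hx => by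
    have h1 : f x = 1 := hx
    exact Subgroup.mem_comap.mpr (by rw [h1]; exact one_mem W)
  constructor
  · intro X Z hXZ
    refine le_antisymm (sup_le (le_inf le_sup_left hXZ)
      (le_inf (inf_le_left.trans le_sup_right) inf_le_right)) ?_
    intro z hz
    obtain ⟨hz1, hzZ⟩ := Subgroup.mem_inf.mp hz
    have key : f z ∈ Subgroup.map f (X ⊔ (Subgroup.comap f M ⊓ Z)) := by
      rw [Subgroup.map_sup, map_inf_of_ker_le f Z (hker M),
        Subgroup.map_comap_eq_self_of_surjective hf,
        hM1 _ _ (Subgroup.map_mono hXZ)]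
      refine Subgroup.mem_inf.mpr ⟨?_, ⟨z, hzZ, rfl⟩⟩
      have : f z ∈ Subgroup.map f (X ⊔ Subgroup.comap f M) :=
        Subgroup.mem_map_of_mem f hz1
      rwa [Subgroup.map_sup, Subgroup.map_comap_eq_self_of_surjective hf] at this
    obtain ⟨w, hw, hwz⟩ := key
    have hwZ : w ∈ Z := (sup_le hXZ inf_le_right : X ⊔ (Subgroup.comap f M ⊓ Z) ≤ Z) hw
    have hzw : z * w⁻¹ ∈ Subgroup.comap f M ⊓ Z := by
      refine Subgroup.mem_inf.mpr ⟨hker M ?_, mul_mem hzZ (inv_mem hwZ)⟩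
      rw [MonoidHom.mem_ker, map_mul, map_inv, hwz, mul_inv_cancel]
    have : (z * w⁻¹) * w ∈ X ⊔ (Subgroup.comap f M ⊓ Z) :=
      mul_mem ((le_sup_right : _ ≤ X ⊔ (Subgroup.comap f M ⊓ Z)) hzw) hw
    simpa using this
  · intro Y Z hMZ
    refine le_antisymm (sup_le (le_inf le_sup_left hMZ)
      (le_inf (inf_le_left.trans le_sup_right) inf_le_right)) ?_
    intro z hz
    obtain ⟨hz1, hzZ⟩ := Subgroup.mem_inf.mp hz
    set Y' := Y ⊔ f.ker with hY'
    have hkerY' : f.ker ≤ Y' := le_sup_right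
    have hMY' : Subgroup.comap f M ⊔ Y = Subgroup.comap f M ⊔ Y' := by
      rw [hY', sup_comm Y f.ker, ← sup_assoc]
      congr 1
      exact (sup_of_le_left (hker M)).symm
    have hMmapZ : M ≤ Subgroup.map f Z := by
      intro m hm
      obtain ⟨g, rfl⟩ := hf m
      exact ⟨g, hMZ hm, rfl⟩
    have key : f z ∈ Subgroup.map f (Subgroup.comap f M ⊔ (Y' ⊓ Z)) := by
      rw [Subgroup.map_sup, map_inf_of_ker_le f Z hkerY',
        Subgroup.map_comap_eq_self_of_surjective hf,
        hM2 _ _ hMmapZ]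
      refine Subgroup.mem_inf.mpr ⟨?_, ⟨z, hzZ, rfl⟩⟩
      have : f z ∈ Subgroup.map f (Subgroup.comap f M ⊔ Y) :=
        Subgroup.mem_map_of_mem f hz1
      rwa [hMY', Subgroup.map_sup, Subgroup.map_comap_eq_self_of_surjective hf] at this
    obtain ⟨w, hw, hwz⟩ := key
    have hwZ : w ∈ Z :=
      (sup_le hMZ inf_le_right : Subgroup.comap f M ⊔ (Y' ⊓ Z) ≤ Z) hw
    have hzw : z * w⁻¹ ∈ Subgroup.comap f M := by
      refine hker M ?_
      rw [MonoidHom.mem_ker, map_mul, map_inv, hwz, mul_inv_cancel]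
    have hzmem : z ∈ Subgroup.comap f M ⊔ (Y' ⊓ Z) := by
      have : (z * w⁻¹) * w ∈ Subgroup.comap f M ⊔ (Y' ⊓ Z) :=
        mul_mem ((le_sup_left : _ ≤ _ ⊔ (Y' ⊓ Z)) hzw) hw
      simpa using this
    -- push `Y' ⊓ Z` into `comap f M ⊔ (Y ⊓ Z)`
    have hfinal : Subgroup.comap f M ⊔ (Y' ⊓ Z) ≤ Subgroup.comap f M ⊔ (Y ⊓ Z) := by
      refine sup_le le_sup_left ?_
      intro u hu
      obtain ⟨hu1, hu2⟩ := Subgroup.mem_inf.mp hu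
      have hu1' : u ∈ (↑(Y ⊔ f.ker) : Set G) := hu1
      rw [Subgroup.mul_normal] at hu1'
      obtain ⟨y, hy, κ, hκ, rfl⟩ := hu1'
      have hκM : κ ∈ Subgroup.comap f M := hker M hκ
      have hκZ : κ ∈ Z := hMZ hκM
      have hyZ : y ∈ Z := by
        have : (y * κ) * κ⁻¹ ∈ Z := mul_mem hu2 (inv_mem hκZ)
        simpa using this
      exact mul_mem ((le_sup_right : _ ≤ Subgroup.comap f M ⊔ (Y ⊓ Z)) (Subgroup.mem_inf.mpr ⟨hy, hyZ⟩))
        ((le_sup_left : _ ≤ _ ⊔ (Y ⊓ Z)) hκM)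
    exact hfinal hzmem

theorem isModular_map {f : G →* H₁} (hf : Function.Surjective f) {M : Subgroup G}
    (hM : IsModularSubgroup M) : IsModularSubgroup (Subgroup.map f M) := by
  obtain ⟨hM1, hM2⟩ := hM
  constructor
  · intro X' Z' hXZ
    have h1 := hM1 (Subgroup.comap f X') (Subgroup.comap f Z') (Subgroup.comap_mono hXZ)
    have := congrArg (Subgroup.map f) h1
    rwa [Subgroup.map_sup, map_inf_comap_right, map_inf_comap_right,
      Subgroup.map_sup, Subgroup.map_comap_eq_self_of_surjective hf] at this
  · intro Y' Z' hMZ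
    have hMZ' : M ≤ Subgroup.comap f Z' := fun m hm => hMZ ⟨m, hm, rfl⟩
    have h2 := hM2 (Subgroup.comap f Y') (Subgroup.comap f Z') hMZ'
    have := congrArg (Subgroup.map f) h2
    rwa [Subgroup.map_sup, ← Subgroup.comap_inf, map_inf_comap_right,
      Subgroup.map_sup, Subgroup.map_comap_eq_self_of_surjective hf,
      Subgroup.map_comap_eq_self_of_surjective hf] at this

end Aux2

section Aux3
variable {G : Type*} [Group G] {H₁ : Type*} [Group H₁]

theorem isSigmaSubnormal_of_step (σ : SigmaPartition) {A : Subgroup G}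
    (h : SigmaStep σ A ⊤) : IsSigmaSubnormal σ A := by
  refine ⟨1, ![A, ⊤], by simp, by simp [Fin.last], ?_⟩
  intro i
  fin_cases i
  simpa using h

theorem isSigmaSubnormal_of_normal (σ : SigmaPartition) {A : Subgroup G}
    (hA : A.Normal) : IsSigmaSubnormal σ A :=
  isSigmaSubnormal_of_step σ ⟨le_top, Or.inl (hA.subgroupOf ⊤)⟩

theorem card_quotient_normalCore_dvd [Finite G] (f : G →* H₁)
    (hf : Function.Surjective f) (A : Subgroup G) (hker : f.ker ≤ A) :
    Nat.card (G ⧸ A.normalCore) ∣ Nat.card H₁ := by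
  have hker' : f.ker ≤ A.normalCore := Subgroup.normal_le_normalCore.mpr hker
  have hsurj : Function.Surjective
      (QuotientGroup.map f.ker A.normalCore (MonoidHom.id G) hker') := by
    intro x
    obtain ⟨g, rfl⟩ := QuotientGroup.mk_surjective x
    exact ⟨QuotientGroup.mk g, rfl⟩
  have h1 : Nat.card (G ⧸ A.normalCore) ∣ Nat.card (G ⧸ f.ker) :=
    Subgroup.card_dvd_of_surjective _ hsurj
  rwa [Nat.card_congr (QuotientGroup.quotientKerEquivOfSurjective f hf).toEquiv] at h1

theorem isSigmaSubnormal_of_quot [Finite G] (σ : SigmaPartition) (A : Subgroup G)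
    {n : ℕ} (hdvd : Nat.card (G ⧸ A.normalCore) ∣ n) (hn : IsSigmaPrimaryCard σ n) :
    IsSigmaSubnormal σ A := by
  refine isSigmaSubnormal_of_step σ ⟨le_top, Or.inr ?_⟩
  refine isSigmaPrimaryCard_of_dvd σ hn ?_
  refine dvd_trans ?_ hdvd
  -- compare the quotient of ⊤ with the quotient of G
  set f : ↥(⊤ : Subgroup G) →* G ⧸ A.normalCore :=
    (QuotientGroup.mk' A.normalCore).comp (Subgroup.subtype ⊤) with hfdef
  have hfsurj : Function.Surjective f := by
    intro x
    obtain ⟨g, rfl⟩ := QuotientGroup.mk_surjective x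
    exact ⟨⟨g, trivial⟩, rfl⟩
  have hkerf : f.ker ≤ A.subgroupOf ⊤ := by
    intro x hx
    have : ((x : G) : G ⧸ A.normalCore) = 1 := hx
    have hx' : (x : G) ∈ A.normalCore := (QuotientGroup.eq_one_iff _).mp this
    exact Subgroup.mem_subgroupOf.mpr (A.normalCore_le hx')
  exact card_quotient_normalCore_dvd f hfsurj (A.subgroupOf ⊤) hkerf

end Aux3

section Aux4
variable {G : Type*} [Group G]

theorem conj_zpow_mem {t : G} {S : Subgroup G} {qq : ℕ} (htq : t ^ qq = 1)
    (hqpos : 0 < qq) (hconj : ∀ s ∈ S, t * s * t⁻¹ ∈ S) :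
    ∀ (r : ℤ), ∀ s ∈ S, t ^ r * s * (t ^ r)⁻¹ ∈ S := by
  have hnat : ∀ m : ℕ, ∀ s ∈ S, t ^ m * s * (t ^ m)⁻¹ ∈ S := by
    intro m
    induction m with
    | zero => intro s hs; simpa using hs
    | succ m ih =>
      intro s hs
      have h2 := hconj _ (ih s hs)
      have heq : t ^ (m + 1) * s * (t ^ (m + 1))⁻¹
          = t * (t ^ m * s * (t ^ m)⁻¹) * t⁻¹ := by
        rw [pow_succ']; group
      rw [heq]; exact h2
  have hinvt : t⁻¹ = t ^ (qq - 1) := by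
    have e : t ^ (qq - 1) * t = 1 := by
      rw [← pow_succ, Nat.sub_add_cancel hqpos, htq]
    exact inv_eq_of_mul_eq_one_left e
  have hinv : ∀ s ∈ S, t⁻¹ * s * t ∈ S := by
    intro s hs
    have := hnat (qq - 1) s hs
    rw [← hinvt] at this
    simpa [inv_inv] using this
  have hnat' : ∀ m : ℕ, ∀ s ∈ S, (t ^ m)⁻¹ * s * t ^ m ∈ S := by
    intro m
    induction m with
    | zero => intro s hs; simpa using hs
    | succ m ih =>
      intro s hs
      have h2 := hinv _ (ih s hs)
      have heq : (t ^ (m + 1))⁻¹ * s * t ^ (m + 1)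
          = t⁻¹ * ((t ^ m)⁻¹ * s * t ^ m) * t := by
        rw [pow_succ']; group
      rw [heq]; exact h2
  intro r s hs
  cases r with
  | ofNat m => simpa [zpow_natCast] using hnat m s hs
  | negSucc m =>
    have := hnat' (m + 1) s hs
    simpa [zpow_negSucc, inv_inv] using this

theorem zpow_eq_one_of_dvd {a : G} {pp : ℕ} (ha : a ^ pp = 1) {r : ℤ}
    (h : (pp : ℤ) ∣ r) : a ^ r = 1 := by
  obtain ⟨c, rfl⟩ := h
  rw [zpow_mul, zpow_natCast, ha, one_zpow]

theorem exists_int_inverse {pp : ℕ} (hp : pp.Prime) {r : ℤ} (hr : ¬ (pp : ℤ) ∣ r) :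
    ∃ α β : ℤ, (pp : ℤ) ∣ r * α + 1 ∧ (pp : ℤ) ∣ α * β - 1 := by
  haveI : Fact pp.Prime := ⟨hp⟩
  have hr0 : (r : ZMod pp) ≠ 0 := by rwa [Ne, ZMod.intCast_zmod_eq_zero_iff_dvd]
  obtain ⟨α, hα⟩ := ZMod.intCast_surjective (-(r : ZMod pp)⁻¹)
  have hα0 : (α : ZMod pp) ≠ 0 := by
    rw [hα]
    simpa using inv_ne_zero hr0
  obtain ⟨β, hβ⟩ := ZMod.intCast_surjective ((α : ZMod pp)⁻¹)
  refine ⟨α, β, ?_, ?_⟩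
  · rw [← ZMod.intCast_zmod_eq_zero_iff_dvd]
    push_cast
    rw [hα]
    field_simp
    ring
  · rw [← ZMod.intCast_zmod_eq_zero_iff_dvd]
    push_cast
    rw [hβ]
    field_simp
    ring

end Aux4

section Aux5

theorem modular_law_of_pType {X : Type*} [Group X] {p q : ℕ}
    (hX : IsPGroupOfType p q X) (H K L : Subgroup X) (hHL : H ≤ L) :
    H ⊔ (K ⊓ L) = (H ⊔ K) ⊓ L := by
  obtain ⟨hp, hq, hpq, A, t, hAne, hApow, hAcomm, ht, hAnorm, hsupAt, hinfAt, hpowaut, -⟩ := hX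
  haveI := hAnorm
  have htq : t ^ q = 1 := by rw [← ht]; exact pow_orderOf_eq_one t
  have heasy : H ⊔ (K ⊓ L) ≤ (H ⊔ K) ⊓ L :=
    sup_le (le_inf le_sup_left hHL) (le_inf (inf_le_left.trans le_sup_right) inf_le_right)
  -- decomposition of arbitrary elements
  have hdecomp : ∀ x : X, ∃ a ∈ A, ∃ r : ℤ, x = a * t ^ r := by
    intro x
    have hx : x ∈ (↑(A ⊔ Subgroup.zpowers t) : Set X) := by rw [hsupAt]; trivial
    rw [Subgroup.normal_mul] at hx
    obtain ⟨a, ha, y, hy, hxy⟩ := hx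
    obtain ⟨r, hr⟩ := Subgroup.mem_zpowers_iff.mp hy
    exact ⟨a, ha, r, by rw [← hxy, ← hr]⟩
  have hconjz : ∀ S : Subgroup X, S ≤ A → ∀ (r : ℤ), ∀ s ∈ S, t ^ r * s * (t ^ r)⁻¹ ∈ S :=
    fun S hS => conj_zpow_mem htq hq.pos (fun s hs => hpowaut S hS s hs)
  -- every subgroup of A is normal in X
  have hnormal : ∀ S : Subgroup X, S ≤ A → S.Normal := by
    intro S hS
    refine ⟨fun s hs g => ?_⟩
    obtain ⟨a, ha, r, rfl⟩ := hdecomp g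
    have hs' : t ^ r * s * (t ^ r)⁻¹ ∈ S := hconjz S hS r s hs
    have hcomm : a * (t ^ r * s * (t ^ r)⁻¹) = (t ^ r * s * (t ^ r)⁻¹) * a :=
      hAcomm a ha _ (hS hs')
    have heq : (a * t ^ r) * s * (a * t ^ r)⁻¹ = a * (t ^ r * s * (t ^ r)⁻¹) * a⁻¹ := by
      group
    rw [heq, hcomm, mul_inv_cancel_right]
    exact hs'
  -- existence of exponents matching cosets of A
  have hmodm : ∀ h : X, h ∉ A → ∀ x : X, ∃ m : ℤ, x * (h ^ m)⁻¹ ∈ A := by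
    intro h hh x
    obtain ⟨a, ha, i, hhi⟩ := hdecomp h
    obtain ⟨b, hb, s0, hxs⟩ := hdecomp x
    haveI : Fact q.Prime := ⟨hq⟩
    have hiq : ¬ ((q : ℤ) ∣ i) := by
      rintro ⟨c, hc⟩
      apply hh
      have h1 : t ^ i = 1 := by rw [hc, zpow_mul, zpow_natCast, htq, one_zpow]
      rw [hhi, h1, mul_one]; exact ha
    have hi0 : (i : ZMod q) ≠ 0 := by rwa [Ne, ZMod.intCast_zmod_eq_zero_iff_dvd]
    obtain ⟨m, hm⟩ := ZMod.intCast_surjective ((s0 : ZMod q) * (i : ZMod q)⁻¹)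
    have hdvd : (q : ℤ) ∣ (s0 - i * m) := by
      rw [← ZMod.intCast_zmod_eq_zero_iff_dvd]
      push_cast
      rw [hm]
      field_simp
      ring
    refine ⟨m, ?_⟩
    rw [← QuotientGroup.eq_one_iff]
    have hta : ∀ y, y ∈ A → ((y : X) : X ⧸ A) = 1 := fun y hy =>
      (QuotientGroup.eq_one_iff y).mpr hy
    have key : ((x * (h ^ m)⁻¹ : X) : X ⧸ A) = ((t : X) : X ⧸ A) ^ (s0 - i * m) := by
      rw [hxs, hhi]
      rw [QuotientGroup.mk_mul, QuotientGroup.mk_inv, QuotientGroup.mk_zpow,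
        QuotientGroup.mk_mul, QuotientGroup.mk_mul, QuotientGroup.mk_zpow,
        hta a ha, hta b hb, one_mul, one_mul, QuotientGroup.mk_zpow, ← zpow_mul, ← zpow_sub]
    rw [key]
    obtain ⟨c, hc⟩ := hdvd
    have hq1 : ((t : X) : X ⧸ A) ^ (q : ℤ) = 1 := by
      rw [← QuotientGroup.mk_zpow, zpow_natCast, htq, QuotientGroup.mk_one]
    rw [hc, zpow_mul, hq1, one_zpow]
  -- the two normal cases
  by_cases hKA : K ≤ A
  · haveI := hnormal K hKA
    refine le_antisymm heasy ?_
    intro z hz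
    obtain ⟨hz1, hzL⟩ := Subgroup.mem_inf.mp hz
    have hz1' : z ∈ (↑(H ⊔ K) : Set X) := hz1
    rw [Subgroup.mul_normal] at hz1'
    obtain ⟨x, hx, y, hy, rfl⟩ := hz1'
    have hyL : y ∈ L := by
      have := mul_mem (inv_mem (hHL hx)) hzL
      simpa using this
    exact mul_mem ((le_sup_left : H ≤ _) hx) ((le_sup_right : K ⊓ L ≤ _) ⟨hy, hyL⟩)
  by_cases hHA : H ≤ A
  · haveI := hnormal H hHA
    refine le_antisymm heasy ?_
    intro z hz
    obtain ⟨hz1, hzL⟩ := Subgroup.mem_inf.mp hz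
    have hz1' : z ∈ (↑(H ⊔ K) : Set X) := hz1
    rw [Subgroup.normal_mul] at hz1'
    obtain ⟨x, hx, y, hy, rfl⟩ := hz1'
    have hyL : y ∈ L := by
      have := mul_mem (inv_mem (hHL hx)) hzL
      simpa using this
    exact mul_mem ((le_sup_left : H ≤ _) hx) ((le_sup_right : K ⊓ L ≤ _) ⟨hy, hyL⟩)
  -- the main case : both H and K contain elements outside A
  obtain ⟨h, hhH, hhA⟩ := SetLike.not_le_iff_exists.mp hHA
  obtain ⟨k, hkK, hkA⟩ := SetLike.not_le_iff_exists.mp hKA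
  obtain ⟨m, hdm⟩ := hmodm h hhA k
  set d : X := h ^ m * k⁻¹ with hd
  have hdA : d ∈ A := by
    have h1 : (k * (h ^ m)⁻¹)⁻¹ ∈ A := inv_mem hdm
    have h2 : (k * (h ^ m)⁻¹)⁻¹ = d := by rw [hd]; group
    rwa [h2] at h1
  set B1 := H ⊓ A with hB1
  set B2 := K ⊓ A with hB2
  set B3 := Subgroup.zpowers d with hB3
  set B4 := Subgroup.zpowers h ⊓ A with hB4
  set D := B1 ⊔ B2 ⊔ B3 ⊔ B4 with hD
  have hB1A : B1 ≤ A := inf_le_right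
  have hB2A : B2 ≤ A := inf_le_right
  have hB3A : B3 ≤ A := Subgroup.zpowers_le.mpr hdA
  have hB4A : B4 ≤ A := inf_le_right
  have hDA : D ≤ A := sup_le (sup_le (sup_le hB1A hB2A) hB3A) hB4A
  haveI hDnorm : D.Normal := hnormal D hDA
  haveI hB3norm : B3.Normal := hnormal B3 hB3A
  haveI hB2norm : B2.Normal := hnormal B2 hB2A
  haveI hB4norm : B4.Normal := hnormal B4 hB4A
  have hB1D : B1 ≤ D :=
    (le_sup_left : B1 ≤ B1 ⊔ B2).trans ((le_sup_left : B1 ⊔ B2 ≤ B1 ⊔ B2 ⊔ B3).trans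
      (le_sup_left : B1 ⊔ B2 ⊔ B3 ≤ D))
  have hB2D : B2 ≤ D :=
    (le_sup_right : B2 ≤ B1 ⊔ B2).trans ((le_sup_left : B1 ⊔ B2 ≤ B1 ⊔ B2 ⊔ B3).trans
      (le_sup_left : B1 ⊔ B2 ⊔ B3 ≤ D))
  have hB3D : B3 ≤ D :=
    (le_sup_right : B3 ≤ B1 ⊔ B2 ⊔ B3).trans (le_sup_left : B1 ⊔ B2 ⊔ B3 ≤ D)
  have hB4D : B4 ≤ D := le_sup_right
  have hk_eq : k = d⁻¹ * h ^ m := by rw [hd]; group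
  have hkDh : k ∈ D ⊔ Subgroup.zpowers h := by
    rw [hk_eq]
    exact mul_mem ((le_sup_left : D ≤ _) (inv_mem (hB3D (Subgroup.mem_zpowers d))))
      ((le_sup_right : Subgroup.zpowers h ≤ _) ((Subgroup.zpowers h).zpow_mem (Subgroup.mem_zpowers h) m))
  have hC1 : H ⊔ K ≤ D ⊔ Subgroup.zpowers h := by
    refine sup_le ?_ ?_
    · intro x hx
      obtain ⟨m', hm'⟩ := hmodm h hhA x
      have hx1 : x * (h ^ m')⁻¹ ∈ B1 := Subgroup.mem_inf.mpr ⟨mul_mem hx (inv_mem (H.zpow_mem hhH m')), hm'⟩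
      have hxe : x = (x * (h ^ m')⁻¹) * h ^ m' := by group
      rw [hxe]
      exact mul_mem ((le_sup_left : D ≤ _) (hB1D hx1))
        ((le_sup_right : Subgroup.zpowers h ≤ _) ((Subgroup.zpowers h).zpow_mem (Subgroup.mem_zpowers h) m'))
    · intro x hx
      obtain ⟨m'', hm''⟩ := hmodm k hkA x
      have hx1 : x * (k ^ m'')⁻¹ ∈ B2 := Subgroup.mem_inf.mpr ⟨mul_mem hx (inv_mem (K.zpow_mem hkK m'')), hm''⟩
      have hxe : x = (x * (k ^ m'')⁻¹) * k ^ m'' := by group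
      rw [hxe]
      exact mul_mem ((le_sup_left : D ≤ _) (hB2D hx1))
        ((D ⊔ Subgroup.zpowers h).zpow_mem hkDh m'')
  have hC2 : ∀ x ∈ D ⊔ Subgroup.zpowers h, x ∈ A → x ∈ D := by
    intro x hx hxA
    have hx' : x ∈ (↑(D ⊔ Subgroup.zpowers h) : Set X) := hx
    rw [Subgroup.normal_mul] at hx'
    obtain ⟨e, he, y, hy, hxy⟩ := hx'
    obtain ⟨r, hr⟩ := Subgroup.mem_zpowers_iff.mp hy
    have hyA : y ∈ A := by
      have h1 := mul_mem (inv_mem (hDA he)) hxA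
      rw [← hxy] at h1
      simpa using h1
    have hy4 : y ∈ B4 := ⟨by rw [← hr]; exact (Subgroup.zpowers h).zpow_mem (Subgroup.mem_zpowers h) r, hyA⟩
    rw [← hxy]
    exact mul_mem he (hB4D hy4)
  -- now the main inclusion
  refine le_antisymm heasy ?_
  intro z hz
  obtain ⟨hz1, hzL⟩ := Subgroup.mem_inf.mp hz
  obtain ⟨m₀, hcA⟩ := hmodm h hhA z
  set c := z * (h ^ m₀)⁻¹ with hc
  have hcHK : c ∈ H ⊔ K :=
    mul_mem hz1 (inv_mem ((le_sup_left : H ≤ H ⊔ K) (H.zpow_mem hhH m₀)))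
  have hcL : c ∈ L := mul_mem hzL (inv_mem (hHL (H.zpow_mem hhH m₀)))
  have hcD : c ∈ D := hC2 c (hC1 hcHK) hcA
  -- decompose c as a product u * v * d^r * w4
  have hcD' : c ∈ (↑(B1 ⊔ B2 ⊔ B3 ⊔ B4) : Set X) := by rw [← hD]; exact hcD
  rw [Subgroup.mul_normal] at hcD'
  obtain ⟨c3, hc3, w4, hw4, hceq⟩ := hcD'
  rw [Subgroup.mul_normal] at hc3
  obtain ⟨c12, hc12, w3, hw3, hc3eq⟩ := hc3
  rw [Subgroup.mul_normal] at hc12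
  obtain ⟨u, hu, v, hv, hc12eq⟩ := hc12
  obtain ⟨r, hr⟩ := Subgroup.mem_zpowers_iff.mp hw3
  have huB1 : u ∈ B1 := hu
  have hvB2 : v ∈ B2 := hv
  have hw4B4 : w4 ∈ B4 := hw4
  have huH : u ∈ H := huB1.1
  have huA : u ∈ A := huB1.2
  have hvK : v ∈ K := hvB2.1
  have hvA : v ∈ A := hvB2.2
  have hw4H : w4 ∈ H := by
    obtain ⟨r4, hr4⟩ := Subgroup.mem_zpowers_iff.mp hw4B4.1
    rw [← hr4]
    exact H.zpow_mem hhH r4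
  set w := v * d ^ r with hw_def
  have hceq2 : c = u * w * w4 := by
    rw [hw_def, ← hceq, ← hc3eq, ← hc12eq, ← hr]
    group
  have hwL : w ∈ L := by
    have hwe : w = u⁻¹ * (c * w4⁻¹) := by rw [hceq2]; group
    rw [hwe]
    exact mul_mem (inv_mem (hHL huH)) (mul_mem hcL (inv_mem (hHL hw4H)))
  have hwA : w ∈ A := mul_mem hvA (A.zpow_mem hdA r)
  suffices hwmem : w ∈ H ⊔ (K ⊓ L) by
    have hzeq : z = u * w * w4 * h ^ m₀ := by rw [← hceq2, hc]; group
    rw [hzeq]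
    exact mul_mem (mul_mem (mul_mem ((le_sup_left : H ≤ H ⊔ (K ⊓ L)) huH) hwmem)
      ((le_sup_left : H ≤ H ⊔ (K ⊓ L)) hw4H))
      ((le_sup_left : H ≤ H ⊔ (K ⊓ L)) (H.zpow_mem hhH m₀))
  by_cases hpr : (p : ℤ) ∣ r
  · have hd1 : d ^ r = 1 := zpow_eq_one_of_dvd (hApow d hdA) hpr
    have hwv : w = v := by rw [hw_def, hd1, mul_one]
    rw [hwv]
    exact (le_sup_right : K ⊓ L ≤ H ⊔ (K ⊓ L)) ⟨hvK, hwv ▸ hwL⟩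
  · obtain ⟨α, β, hα, hβ⟩ := exists_int_inverse hp hpr
    have hcomm : Commute v (d ^ r) := hAcomm v hvA (d ^ r) (A.zpow_mem hdA r)
    have hwα : w ^ α = v ^ α * d ^ (r * α) := by
      rw [hw_def, hcomm.mul_zpow, ← zpow_mul]
    set ζ := w ^ α * h ^ m with hζ
    have hζK : ζ ∈ K := by
      have h5 : ζ = v ^ α * d ^ (r * α + 1) * k := by
        rw [hζ, hwα, zpow_add_one, hd]
        group
      rw [h5, zpow_eq_one_of_dvd (hApow d hdA) hα, mul_one]
      exact mul_mem (K.zpow_mem hvK α) hkK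
    have hζL : ζ ∈ L := mul_mem (L.zpow_mem hwL α) (hHL (H.zpow_mem hhH m))
    have hwβ : w = (w ^ α) ^ β := by
      rw [← zpow_mul]
      have h6 : w ^ (α * β - 1) = 1 := zpow_eq_one_of_dvd (hApow w hwA) hβ
      calc w = w ^ (α * β - 1) * w := by rw [h6, one_mul]
        _ = w ^ (α * β - 1 + 1) := by rw [zpow_add_one]
        _ = w ^ (α * β) := by ring_nf
    have hwαmem : w ^ α ∈ H ⊔ (K ⊓ L) := by
      have hζe : w ^ α = ζ * (h ^ m)⁻¹ := by rw [hζ]; group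
      rw [hζe]
      exact mul_mem ((le_sup_right : K ⊓ L ≤ _) ⟨hζK, hζL⟩)
        ((le_sup_left : H ≤ _) (inv_mem (H.zpow_mem hhH m)))
    rw [hwβ]
    exact (H ⊔ (K ⊓ L)).zpow_mem hwαmem β

theorem isModular_of_pType {X : Type*} [Group X] {p q : ℕ}
    (hX : IsPGroupOfType p q X) (M : Subgroup X) : IsModularSubgroup M :=
  ⟨fun Y Z hYZ => modular_law_of_pType hX Y M Z hYZ,
   fun Y Z hMZ => modular_law_of_pType hX M Y Z hMZ⟩

end Aux5

/-- Lemma 2.5: if `G` is a QσT-group, then `G/R` satisfies `Q_{σ(p,q)}` for every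
normal subgroup `R` and every pair of primes `(p, q)` for which a non-abelian
P-group of type `(p, q)` exists. -/
theorem qSigmaT_satisfiesQSigmaPQ (σ : SigmaPartition) (G : Type*) [Group G] [Finite G]
    (h : IsQSigmaT σ G) (R : Subgroup G) [R.Normal] (p q : ℕ)
    (hex : ∃ (X : Type) (g : Group X), letI := g; (Finite X ∧ IsPGroupOfType p q X)) :
    SatisfiesQSigmaPQ σ p q (G ⧸ R) := by
  intro N hN _hsol P hPnorm hPprim hPtype S hSP
  haveI := hN
  set π : G →* (G ⧸ R) ⧸ N := (QuotientGroup.mk' N).comp (QuotientGroup.mk' R) with hπ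
  have hπs : Function.Surjective π :=
    (QuotientGroup.mk'_surjective N).comp (QuotientGroup.mk'_surjective R)
  set Pb := Subgroup.comap π P with hPb
  set Sb := Subgroup.comap π S with hSb
  have hSbPb : Sb ≤ Pb := Subgroup.comap_mono hSP
  have hmemP : ∀ x : ↥Pb, (π.domRestrict Pb) x ∈ P := fun x => x.2
  set f : ↥Pb →* ↥P := (π.domRestrict Pb).codRestrict P hmemP with hf
  have hfval : ∀ x : ↥Pb, ((f x : (G ⧸ R) ⧸ N)) = π ↑x := fun x => rfl
  have hfs : Function.Surjective f := by
    rintro ⟨y, hy⟩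
    obtain ⟨g, hg⟩ := hπs y
    have hgPb : g ∈ Pb := by
      rw [hPb]
      exact Subgroup.mem_comap.mpr (by rw [hg]; exact hy)
    exact ⟨⟨g, hgPb⟩, Subtype.ext (by rw [hfval]; exact hg)⟩
  have hPbnorm : Pb.Normal := hPnorm.comap π
  have hPbqn : IsSigmaQuasinormal σ Pb :=
    ⟨isSigmaSubnormal_of_normal σ hPbnorm, isModular_of_normal Pb hPbnorm⟩
  have hcomapf : Subgroup.comap f (S.subgroupOf P) = Sb.subgroupOf Pb := by
    ext x
    rw [Subgroup.mem_comap, Subgroup.mem_subgroupOf, Subgroup.mem_subgroupOf, hSb,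
      Subgroup.mem_comap]
    exact Iff.rfl
  have hmodSb : IsModularSubgroup (Sb.subgroupOf Pb) := by
    rw [← hcomapf]
    exact isModular_comap hfs (isModular_of_pType hPtype (S.subgroupOf P))
  have hkerf : f.ker ≤ Sb.subgroupOf Pb := by
    intro x hx
    have h1 : f x = 1 := hx
    have h2 : π ↑x = 1 := by rw [← hfval, h1]; rfl
    show (x : G) ∈ Sb
    rw [hSb]
    exact Subgroup.mem_comap.mpr (by rw [h2]; exact one_mem S)
  have hsubSb : IsSigmaSubnormal σ (Sb.subgroupOf Pb) :=
    isSigmaSubnormal_of_quot σ _ (card_quotient_normalCore_dvd f hfs _ hkerf) hPprim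
  have hSbqn : IsSigmaQuasinormal σ Sb := h Sb Pb hSbPb ⟨hsubSb, hmodSb⟩ hPbqn
  have hmodS : IsModularSubgroup (Subgroup.map π Sb) := isModular_map hπs hSbqn.2
  rwa [hSb, Subgroup.map_comap_eq_self_of_surjective hπs] at hmodS
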